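/- Let c ∈ {0,1}^ℕ be the binary Champernowne sequence. For every n ≥ 1, at the position p_n = (n−1)·2^n + 1 (the total length of the binary representations of 1,2,…,2^n − 1) one has L_{p_n}(c) = n. -/

import Mathlib

open Filter

open Classical in
/-- `L_n(x)`: the maximal length of a run of consecutive ones among the first `n`
digits (positions `1,…,n`) of the binary sequence `x`. -/
noncomputable def runL (x : ℕ → Bool) (n : ℕ) : ℕ :=
  Nat.findGreatest
    (fun j => ∃ i, i + j ≤ n ∧ ∀ k, 1 ≤ k → k ≤ j → x (i + k) = true) n

/-- The infinite binary sequence (indexed from 1) obtained by concatenating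
the nonempty blocks `b 1, b 2, b 3, …`. -/
def concatSeq (b : ℕ → List Bool) : ℕ → Bool :=
  fun i => (((List.range i).map fun k => b (k + 1)).flatten).getD (i - 1) false

/-- The binary Champernowne sequence `1 10 11 100 101 110 111 …`, the
concatenation of the binary representations (without leading zeros, most
significant bit first) of `1, 2, 3, …`. -/
def champ : ℕ → Bool :=
  concatSeq fun n => (Nat.bits n).reverse


namespace ChampAux


/-- The block of `m`: binary digits of `m`, most significant first. -/
def blk (m : ℕ) : List Bool := (Nat.bits m).reverse

/-- Concatenation of the blocks of `1, …, M`. -/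
def W (M : ℕ) : List Bool := ((List.range M).map fun k => blk (k + 1)).flatten

lemma blk_length (m : ℕ) : (blk m).length = Nat.size m := by
  simp [blk, Nat.size_eq_bits_len]

lemma W_succ (M : ℕ) : W (M + 1) = W M ++ blk (M + 1) := by
  simp [W, List.range_succ]

lemma length_W_succ (M : ℕ) : (W (M + 1)).length = (W M).length + Nat.size (M + 1) := by
  simp [W_succ, blk_length]

lemma le_length_W (M : ℕ) : M ≤ (W M).length := by
  induction M with
  | zero => simp [W]
  | succ M ih =>
    have h1 : 1 ≤ Nat.size (M + 1) := Nat.size_pos.2 (Nat.succ_pos M)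
    rw [length_W_succ]; omega

lemma W_prefix {M M' : ℕ} (h : M ≤ M') : W M <+: W M' := by
  induction M' with
  | zero => simp_all
  | succ M' ih =>
    rcases Nat.eq_or_lt_of_le h with rfl | h'
    · exact List.prefix_refl _
    · exact (ih (by omega)).trans ⟨blk (M' + 1), (W_succ M').symm⟩

lemma champ_eq {M i : ℕ} (h1 : 1 ≤ i) (h2 : i ≤ (W M).length) :
    champ i = (W M).getD (i - 1) false := by
  have hdef : champ i = (W i).getD (i - 1) false := rfl
  have hM := le_length_W M
  have hii := le_length_W i
  rcases le_total i M with h | h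
  · have hp := W_prefix h
    have hl : i - 1 < (W i).length := by omega
    rw [hdef, List.getD_eq_getElem _ _ hl, List.getD_eq_getElem _ _ (by omega),
      hp.getElem hl]
  · have hp := W_prefix h
    have hl : i - 1 < (W M).length := by omega
    rw [hdef, List.getD_eq_getElem _ _ (by omega), List.getD_eq_getElem _ _ hl,
      hp.getElem hl]

lemma blk_getD {m j : ℕ} (hj : j < Nat.size m) :
    (blk m).getD j false = Nat.testBit m (Nat.size m - 1 - j) := by
  have hlen : (Nat.bits m).length = Nat.size m := Nat.size_eq_bits_len m
  have hj' : j < (blk m).length := by rw [blk_length]; exact hj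
  rw [List.getD_eq_getElem _ _ hj']
  have : (blk m)[j] = (Nat.bits m)[Nat.size m - 1 - j]'(by omega) := by
    simp [blk, List.getElem_reverse, hlen]
  rw [this, Nat.testBit_eq_inth]
  rw [List.getI_eq_getElem _ (by omega)]

/-- Value of the sequence inside block `m`. -/
lemma W_block_getD {m j : ℕ} (hm : 1 ≤ m) (hj : j < Nat.size m) :
    (W m).getD ((W (m - 1)).length + j) false
      = Nat.testBit m (Nat.size m - 1 - j) := by
  obtain ⟨m', rfl⟩ : ∃ m', m = m' + 1 := ⟨m - 1, by omega⟩
  rw [W_succ]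
  simp only [Nat.add_sub_cancel]
  rw [List.getD_append_right _ _ _ _ (Nat.le_add_right _ _), Nat.add_sub_cancel_left]
  exact blk_getD hj

lemma exists_block {M i : ℕ} (h : i < (W M).length) :
    ∃ m, 1 ≤ m ∧ m ≤ M ∧ (W (m - 1)).length ≤ i ∧
      i < (W (m - 1)).length + Nat.size m := by
  induction M with
  | zero => simp [W] at h
  | succ M ih =>
    by_cases h' : i < (W M).length
    · obtain ⟨m, h1, h2, h3, h4⟩ := ih h'
      exact ⟨m, h1, by omega, h3, h4⟩
    · refine ⟨M + 1, by omega, le_refl _, by simpa using h', ?_⟩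
      simpa [Nat.add_sub_cancel] using (length_W_succ M ▸ h)

lemma size_two_pow_sub_one {n : ℕ} (hn : 1 ≤ n) : Nat.size (2 ^ n - 1) = n := by
  have h1 : Nat.size (2 ^ n - 1) ≤ n := Nat.size_le.2 (by
    have : 1 ≤ 2 ^ n := Nat.one_le_two_pow
    omega)
  have h2 : n - 1 < Nat.size (2 ^ n - 1) := Nat.lt_size.2 (by
    have h3 : 2 ^ (n - 1) < 2 ^ n := Nat.pow_lt_pow_right one_lt_two (by omega)
    omega)
  omega

lemma size_of_lt {m n : ℕ} (h1 : 2 ^ n ≤ m) (h2 : m < 2 ^ (n + 1)) :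
    Nat.size m = n + 1 := by
  have := Nat.size_le.2 h2
  have := Nat.lt_size.2 h1
  omega

lemma length_W_pow {n : ℕ} (hn : 1 ≤ n) :
    (W (2 ^ n - 1)).length = (n - 1) * 2 ^ n + 1 := by
  induction n with
  | zero => omega
  | succ n ih =>
    rcases Nat.eq_zero_or_pos n with rfl | hn'
    · have h1 : (W 1).length = 1 := by
        rw [show (1 : ℕ) = 0 + 1 from rfl, length_W_succ]
        simp [W, Nat.size_one]
      norm_num
      exact h1
    · have key : ∀ j, j ≤ 2 ^ n →
          (W (2 ^ n - 1 + j)).length = (W (2 ^ n - 1)).length + j * (n + 1) := by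
        intro j
        induction j with
        | zero => simp
        | succ j ihj =>
          intro hj
          have h1 : 2 ^ n - 1 + j + 1 = 2 ^ n - 1 + (j + 1) := by omega
          have hpos : 1 ≤ 2 ^ n := Nat.one_le_two_pow
          have hsz : Nat.size (2 ^ n - 1 + j + 1) = n + 1 := by
            apply size_of_lt (by omega)
            have : 2 ^ (n + 1) = 2 ^ n + 2 ^ n := by ring
            omega
          rw [← h1, length_W_succ, hsz, ihj (by omega)]
          ring
      have hpos : 1 ≤ 2 ^ n := Nat.one_le_two_pow
      have h2 : 2 ^ (n + 1) - 1 = 2 ^ n - 1 + 2 ^ n := by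
        have : 2 ^ (n + 1) = 2 ^ n + 2 ^ n := by ring
        omega
      rw [h2, key (2 ^ n) le_rfl, ih hn']
      obtain ⟨n', rfl⟩ : ∃ n', n = n' + 1 := ⟨n - 1, by omega⟩
      simp only [Nat.add_sub_cancel]
      ring

/-- Key: no run of `n+1` ones within the first `(n-1)·2^n + 1` digits. -/
lemma no_run {n : ℕ} (hn : 1 ≤ n) (i : ℕ)
    (hle : i + (n + 1) ≤ (n - 1) * 2 ^ n + 1)
    (hrun : ∀ k, 1 ≤ k → k ≤ n + 1 → champ (i + k) = true) : False := by
  set p := (n - 1) * 2 ^ n + 1 with hp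
  have hWlen : (W (2 ^ n - 1)).length = p := length_W_pow hn
  have hi : i < (W (2 ^ n - 1)).length := by omega
  obtain ⟨m, hm1, hmM, hs, hsk⟩ := exists_block hi
  set S := (W (m - 1)).length with hS
  set k := Nat.size m with hk
  have hpow : 1 ≤ 2 ^ n := Nat.one_le_two_pow
  have hk1 : 1 ≤ k := Nat.size_pos.2 hm1
  have hkn : k ≤ n := Nat.size_le.2 (by omega)
  have hWm : (W m).length = S + k := by
    obtain ⟨m', rfl⟩ : ∃ m', m = m' + 1 := ⟨m - 1, by omega⟩
    simpa [hS, hk] using length_W_succ m'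
  -- m is not the last block
  have hmne : m ≠ 2 ^ n - 1 := by
    intro h
    have h1 : (W m).length = p := by rw [h, hWlen]
    have h2 : k = n := by rw [hk, h, size_two_pow_sub_one hn]
    omega
  have hm2 : m + 1 ≤ 2 ^ n - 1 := by omega
  set k' := Nat.size (m + 1) with hk'
  have hk'1 : 1 ≤ k' := Nat.size_pos.2 (by omega)
  have hk'n : k' ≤ n := Nat.size_le.2 (by omega)
  set a := S + k - i with ha
  have ha1 : 1 ≤ a := by omega
  have hak : a ≤ k := by omega
  -- champ at absolute 1-based position q+1 for in-window 0-based index q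
  have hch : ∀ q, i ≤ q → q ≤ i + n → champ (q + 1) = true := by
    intro q h1 h2
    have := hrun (q + 1 - i) (by omega) (by omega)
    rwa [show i + (q + 1 - i) = q + 1 by omega] at this
  -- low a bits of m are ones
  have hbitsm : ∀ q, q < a → Nat.testBit m q = true := by
    intro q hq
    have hidx : k - 1 - q < k := by omega
    have hpos1 : 1 ≤ S + (k - 1 - q) + 1 := by omega
    have hval : champ (S + (k - 1 - q) + 1) = (W m).getD (S + (k - 1 - q)) false := by
      have := champ_eq (M := m) hpos1 (by omega)
      simpa using this
    have hwin : champ (S + (k - 1 - q) + 1) = true := hch _ (by omega) (by omega)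
    have hblk := W_block_getD (m := m) hm1 hidx
    rw [hval, hblk] at hwin
    rwa [show Nat.size m - 1 - (k - 1 - q) = q by omega] at hwin
  -- hence m % 2^a = 2^a - 1
  have hmod : m % 2 ^ a = 2 ^ a - 1 := by
    apply Nat.eq_of_testBit_eq
    intro q
    rw [Nat.testBit_mod_two_pow, Nat.testBit_two_pow_sub_one]
    by_cases hq : q < a
    · simp [hq, hbitsm q hq]
    · simp [hq]
  -- hence low a bits of m+1 are zeros
  have hmod1 : (m + 1) % 2 ^ a = 0 := by
    have h2a : 1 < 2 ^ a := Nat.one_lt_two_pow_iff.2 (by omega)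
    have := Nat.add_mod m 1 (2 ^ a)
    rw [hmod, Nat.mod_eq_of_lt (by omega : 1 < 2 ^ a)] at this
    rw [this, show 2 ^ a - 1 + 1 = 2 ^ a by omega, Nat.mod_self]
  have hlow : ∀ r, r < a → Nat.testBit (m + 1) r = false := by
    intro r hr
    have := Nat.testBit_mod_two_pow (m + 1) a r
    rw [hmod1] at this
    simp only [Nat.zero_testBit] at this
    have := this.symm
    simp only [show decide (r < a) = true by simp [hr], Bool.true_and] at this
    exact this
  -- the window continues into block m+1 with b ≥ 1 positions
  set b := n + 1 - a with hb
  have hb1 : 1 ≤ b := by omega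
  set j := min b k' - 1 with hj
  have hjb : j < b := by omega
  have hjk' : j < k' := by omega
  -- value at 0-based index S + k + j (inside block m+1)
  have hWm1 : (W (m + 1)).length = (W m).length + k' := length_W_succ m
  have hbj : Nat.testBit (m + 1) (k' - 1 - j) = true := by
    have hpos1 : 1 ≤ S + k + j + 1 := by omega
    have hval : champ (S + k + j + 1) = (W (m + 1)).getD (S + k + j) false := by
      have := champ_eq (M := m + 1) hpos1 (by omega)
      simpa using this
    have hwin : champ (S + k + j + 1) = true := hch _ (by omega) (by omega)
    have hblk := W_block_getD (m := m + 1) (by omega) hjk'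
    rw [show m + 1 - 1 = m from rfl, ← hk'] at hblk
    rw [hval] at hwin
    rw [show S + k + j = (W m).length + j by omega] at hwin
    rw [hblk] at hwin
    exact hwin
  have hfin : k' - 1 - j < a := by omega
  rw [hlow _ hfin] at hbj
  exact absurd hbj (by simp)


lemma run_exists {n : ℕ} (hn : 1 ≤ n) :
    ∀ k, 1 ≤ k → k ≤ n → champ ((n - 1) * 2 ^ n + 1 - n + k) = true := by
  set p := (n - 1) * 2 ^ n + 1 with hp
  have hWlen : (W (2 ^ n - 1)).length = p := length_W_pow hn
  have hpow : 2 ≤ 2 ^ n := by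
    calc 2 = 2 ^ 1 := rfl
    _ ≤ 2 ^ n := Nat.pow_le_pow_right (by omega) hn
  have hm1 : 1 ≤ 2 ^ n - 1 := by omega
  have hsz : Nat.size (2 ^ n - 1) = n := size_two_pow_sub_one hn
  have hWm : (W (2 ^ n - 1)).length = (W (2 ^ n - 1 - 1)).length + n := by
    obtain ⟨m', hm'⟩ : ∃ m', 2 ^ n - 1 = m' + 1 := ⟨2 ^ n - 2, by omega⟩
    rw [hm', length_W_succ, ← hm', hsz]
    simp [hm']
  set S := (W (2 ^ n - 1 - 1)).length with hS
  have hSp : S + n = p := by omega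
  intro k h1 h2
  have hpos : p - n + k = S + (k - 1) + 1 := by omega
  have hval : champ (S + (k - 1) + 1) = (W (2 ^ n - 1)).getD (S + (k - 1)) false := by
    have := champ_eq (M := 2 ^ n - 1) (i := S + (k - 1) + 1) (by omega) (by omega)
    simpa using this
  have hblk := W_block_getD (m := 2 ^ n - 1) (j := k - 1) hm1 (by rw [hsz]; omega)
  rw [hpos, hval, hblk, hsz]
  simp only [Nat.testBit_two_pow_sub_one]
  have : n - 1 - (k - 1) < n := by omega
  simp [this]

end ChampAux

/-- At the position `p_n = (n−1)·2^n + 1` (the total length of the binary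
representations of `1, 2, …, 2^n − 1`), the run-length function of the binary
Champernowne sequence equals `n`. -/
theorem champ_runL_at_pn (n : ℕ) (hn : 1 ≤ n) :
    runL champ ((n - 1) * 2 ^ n + 1) = n := by
  have hpow : 2 ≤ 2 ^ n := by
    calc 2 = 2 ^ 1 := rfl
    _ ≤ 2 ^ n := Nat.pow_le_pow_right (by omega) hn
  have h2 : (n - 1) * 2 ≤ (n - 1) * 2 ^ n := Nat.mul_le_mul_left _ hpow
  have hpn : n ≤ (n - 1) * 2 ^ n + 1 := by omega
  classical
  rw [runL, Nat.findGreatest_eq_iff]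
  refine ⟨hpn, fun _ => ⟨(n - 1) * 2 ^ n + 1 - n, by omega,
    fun k hk1 hk2 => ChampAux.run_exists hn k hk1 hk2⟩, ?_⟩
  intro j hj hjle hP
  obtain ⟨i, hij, hr⟩ := hP
  exact ChampAux.no_run hn i (by omega) (fun k h1 h2 => hr k h1 (by omega))
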